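/- The separation array is a complete invariant on simplified forests: if F and G are plane forests, each with N ≥ 2 leaves, in which every internal (non-leaf) node has at least two children, and F and G have equal separation arrays, then F = G. (This justifies the paper's claim that after eliminating single-subordinate aggregator nodes, exactly one organization instance needs to be evaluated per array representation.) -/

import Mathlib

/-- A rooted plane tree: a node carrying a finite ordered list of child subtrees.
A node with no children is a leaf. -/
inductive PTree : Type where
  | node : List PTree → PTree

namespace PTree

mutual
/-- Number of leaves of a plane tree. -/
def leaves : PTree → ℕ
  | .node [] => 1
  | .node (c :: cs) => c.leaves + leavesList cs

/-- Total number of leaves of a list of plane trees. -/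
def leavesList : List PTree → ℕ
  | [] => 0
  | c :: cs => c.leaves + leavesList cs
end

mutual
/-- Height of a plane tree (a single leaf has height 1). -/
def height : PTree → ℕ
  | .node [] => 1
  | .node (c :: cs) => 1 + max c.height (heightList cs)

/-- Maximum height among a list of plane trees (0 for the empty list). -/
def heightList : List PTree → ℕ
  | [] => 0
  | c :: cs => max c.height (heightList cs)
end

mutual
/-- Separation levels between consecutive leaves inside a tree whose root is at level `l`:
between two consecutive leaves lying in distinct children we record `l+1`
(one more than the level of their lowest common ancestor, which is the root). -/
def enc : PTree → ℕ → List ℕ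
  | .node [], _ => []
  | .node (c :: cs), l => c.enc (l + 1) ++ encList cs (l + 1)

/-- Separation levels for a list of sibling subtrees all at level `l`, including
the separator `l` between consecutive subtrees. -/
def encList : List PTree → ℕ → List ℕ
  | [], _ => []
  | c :: cs, l => (l :: c.enc l) ++ encList cs l
end

end PTree

/-- Total number of leaves of a plane forest. -/
def forestLeaves (F : List PTree) : ℕ := PTree.leavesList F

/-- Height of a plane forest: the maximum level of any of its nodes (roots are at level 1). -/
def forestHeight (F : List PTree) : ℕ := PTree.heightList F

/-- The separation array of a plane forest: for each pair of consecutive leaves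
(numbered left to right), the level at which they separate (`1` if they lie in
different trees, and `1 +` the level of their lowest common ancestor otherwise). -/
def forestSep : List PTree → List ℕ
  | [] => []
  | t :: ts => t.enc 1 ++ PTree.encList ts 1

mutual
/-- A plane tree is *simplified* if every internal (non-leaf) node has at least two
children. -/
def PTree.Simplified : PTree → Prop
  | .node [] => True
  | .node (c :: cs) => cs ≠ [] ∧ c.Simplified ∧ SimplifiedList cs

/-- Every tree in the list is simplified. -/
def SimplifiedList : List PTree → Prop
  | [] => True
  | c :: cs => c.Simplified ∧ SimplifiedList cs
end

/-- A plane forest is *simplified* if every internal (non-leaf) node of every one of its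
trees has at least two children. -/
def forestSimplified (F : List PTree) : Prop := SimplifiedList F


/-- Splitting an append at the first element failing `p`. -/
theorem takeWhile_dropWhile_append (p : ℕ → Bool) :
    ∀ (a b : List ℕ), (∀ x ∈ a, p x = true) →
      (∀ y, b.head? = some y → p y = false) →
      (a ++ b).takeWhile p = a ∧ (a ++ b).dropWhile p = b
  | [], b, _, hb => by
    cases b with
    | nil => simp
    | cons y b' =>
      have : p y = false := hb y rfl
      simp [List.takeWhile, List.dropWhile, this]
  | x :: a', b, ha, hb => by
    have hx : p x = true := ha x List.mem_cons_self
    have ih := takeWhile_dropWhile_append p a' b (fun z hz => ha z (List.mem_cons_of_mem x hz)) hb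
    simp [List.takeWhile, List.dropWhile, hx, ih.1, ih.2]

mutual
theorem lt_of_mem_enc : ∀ (t : PTree) (l x : ℕ), x ∈ t.enc l → l < x
  | .node [], l, x, h => by simp [PTree.enc] at h
  | .node (c :: cs), l, x, h => by
    simp only [PTree.enc, List.mem_append] at h
    rcases h with h | h
    · exact Nat.lt_of_succ_le (Nat.le_of_lt (lt_of_mem_enc c _ _ h))
    · exact Nat.lt_of_succ_le (le_of_mem_encList cs _ _ h)
theorem le_of_mem_encList : ∀ (ts : List PTree) (l x : ℕ), x ∈ PTree.encList ts l → l ≤ x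
  | [], l, x, h => by simp [PTree.encList] at h
  | c :: cs, l, x, h => by
    simp only [PTree.encList, List.cons_append, List.mem_cons, List.mem_append] at h
    rcases h with rfl | h | h
    · exact Nat.le_refl x
    · exact Nat.le_of_lt (lt_of_mem_enc c _ _ h)
    · exact le_of_mem_encList cs _ _ h
end

theorem head?_encList_cons (c : PTree) (cs : List PTree) (l : ℕ) :
    (PTree.encList (c :: cs) l).head? = some l := by
  simp [PTree.encList]

theorem encList_head_cond (ts : List PTree) (l : ℕ) :
    ∀ y, (PTree.encList ts l).head? = some y → decide (l < y) = false := by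
  cases ts with
  | nil => intro y hy; simp [PTree.encList] at hy
  | cons c cs =>
    intro y hy
    rw [head?_encList_cons] at hy
    cases hy
    simp

theorem enc_ne_nil (c : PTree) (cs : List PTree) (hcs : cs ≠ []) (l : ℕ) :
    PTree.enc (.node (c :: cs)) l ≠ [] := by
  cases cs with
  | nil => exact absurd rfl hcs
  | cons d ds => simp [PTree.enc, PTree.encList]

/-- Key splitting step: `enc c l ++ encList cs l` determines both parts. -/
theorem split_enc_encList (c d : PTree) (cs ds : List PTree) (l : ℕ)
    (h : PTree.enc c l ++ PTree.encList cs l = PTree.enc d l ++ PTree.encList ds l) :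
    PTree.enc c l = PTree.enc d l ∧ PTree.encList cs l = PTree.encList ds l := by
  set p : ℕ → Bool := fun x => decide (l < x) with hp
  have ha : ∀ x ∈ PTree.enc c l, p x = true := by
    intro x hx; simpa [hp] using lt_of_mem_enc c l x hx
  have ha' : ∀ x ∈ PTree.enc d l, p x = true := by
    intro x hx; simpa [hp] using lt_of_mem_enc d l x hx
  have h1 := takeWhile_dropWhile_append p _ _ ha (encList_head_cond cs l)
  have h2 := takeWhile_dropWhile_append p _ _ ha' (encList_head_cond ds l)
  constructor
  · rw [← h1.1, ← h2.1, h]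
  · rw [← h1.2, ← h2.2, h]

mutual
theorem enc_injective : ∀ (t u : PTree) (l : ℕ), t.Simplified → u.Simplified →
    t.enc l = u.enc l → t = u
  | .node [], .node [], _, _, _, _ => rfl
  | .node [], .node (d :: ds), l, _, hu, h => by
    have hds : ds ≠ [] := hu.1
    exact absurd h.symm (enc_ne_nil d ds hds l)
  | .node (c :: cs), .node [], l, ht, _, h => by
    have hcs : cs ≠ [] := ht.1
    exact absurd h (enc_ne_nil c cs hcs l)
  | .node (c :: cs), .node (d :: ds), l, ht, hu, h => by
    obtain ⟨hcs, hc, hcsl⟩ := ht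
    obtain ⟨hds, hd, hdsl⟩ := hu
    simp only [PTree.enc] at h
    obtain ⟨h1, h2⟩ := split_enc_encList c d cs ds (l + 1) h
    have e1 : c = d := enc_injective c d (l + 1) hc hd h1
    have e2 : cs = ds := encList_injective cs ds (l + 1) hcsl hdsl h2
    rw [e1, e2]
theorem encList_injective : ∀ (ts us : List PTree) (l : ℕ), SimplifiedList ts →
    SimplifiedList us → PTree.encList ts l = PTree.encList us l → ts = us
  | [], [], _, _, _, _ => rfl
  | [], c :: cs, l, _, _, h => by simp [PTree.encList] at h
  | c :: cs, [], l, _, _, h => by simp [PTree.encList] at h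
  | c :: cs, d :: ds, l, ht, hu, h => by
    obtain ⟨hc, hcsl⟩ := ht
    obtain ⟨hd, hdsl⟩ := hu
    simp only [PTree.encList, List.cons_append, List.cons.injEq, true_and] at h
    obtain ⟨h1, h2⟩ := split_enc_encList c d cs ds l h
    have e1 : c = d := enc_injective c d l hc hd h1
    have e2 : cs = ds := encList_injective cs ds l hcsl hdsl h2
    rw [e1, e2]
end

/-- The separation array is a complete invariant on simplified
forests: if `F` and `G` are plane forests, each with `N ≥ 2` leaves, in which every
internal (non-leaf) node has at least two children, and `F` and `G` have equal
separation arrays, then `F = G`. -/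
theorem sepArray_injective_on_simplified (N : ℕ) (hN : 2 ≤ N)
    (F G : List PTree) (hF : F ≠ []) (hG : G ≠ [])
    (hFl : forestLeaves F = N) (hGl : forestLeaves G = N)
    (hFs : forestSimplified F) (hGs : forestSimplified G)
    (hsep : forestSep F = forestSep G) : F = G := by
  obtain ⟨f, fs, rfl⟩ : ∃ f fs, F = f :: fs := by
    cases F with | nil => exact absurd rfl hF | cons f fs => exact ⟨f, fs, rfl⟩
  obtain ⟨g, gs, rfl⟩ : ∃ g gs, G = g :: gs := by
    cases G with | nil => exact absurd rfl hG | cons g gs => exact ⟨g, gs, rfl⟩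
  have h : PTree.encList (f :: fs) 1 = PTree.encList (g :: gs) 1 := by
    simp only [PTree.encList, List.cons_append]
    exact congrArg (1 :: ·) hsep
  exact encList_injective _ _ 1 hFs hGs h
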